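/- For a recycled object satisfying invariant P1, every observer operation has a unique associated modifier: the modifier that wrote the decision value the observer reads, and this modifier is concurrent with or precedes the observer with no other modifier strictly between them in real time. -/
import Mathlib


/-- Under invariant P1, every observer of a recycled object has a unique
associated modifier: the modifier whose write (the latest write to the atomic
decision register before the observer's read) it observes; this modifier is
concurrent with or prior to the observer, and no other modifier lies strictly
between them in real time. -/
theorem stmt11 {Op : Type} (isMod : Op → Prop)
    (inv resp : Op → ℕ) (wt : Op → ℕ)    -- modifiers write to d at time wt
    (o : Op) (rt : ℕ)                    -- the observer o reads d at time rt
    (hint : ∀ a, inv a ≤ resp a)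
    (hwt : ∀ m, isMod m → inv m ≤ wt m ∧ wt m ≤ resp m)
    (hrt : inv o ≤ rt ∧ rt ≤ resp o)
    -- writes to the atomic register occur at distinct times
    (hwtinj : ∀ m m', isMod m → isMod m' → wt m = wt m' → m = m')
    -- the observer reads a non-⊥ value: some write precedes its read
    (hsome : ∃ m, isMod m ∧ wt m < rt) :
    ∃! m, isMod m ∧ wt m < rt ∧
      -- (i) o reads the decision written by m (latest write before the read)
      (∀ m', isMod m' → wt m' < rt → wt m' ≤ wt m) ∧
      -- (ii) m is concurrent with or prior to o
      ¬ resp o < inv m ∧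
      -- (iii) no modifier lies strictly between m and o in real time
      ¬ ∃ m'', isMod m'' ∧ resp m < inv m'' ∧ resp m'' < inv o := by
  classical
  set P : ℕ → Prop := fun n => n < rt ∧ ∃ m, isMod m ∧ wt m = n with hP
  obtain ⟨m₀, hm₀, hlt₀⟩ := hsome
  have hPbase : P (wt m₀) := ⟨hlt₀, m₀, hm₀, rfl⟩
  set N := Nat.findGreatest P rt with hN
  have hPN : P N := Nat.findGreatest_spec (le_of_lt hlt₀) hPbase
  obtain ⟨hNlt, m, hm, hwm⟩ := hPN
  have hmax : ∀ m', isMod m' → wt m' < rt → wt m' ≤ wt m := by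
    intro m' hm' hlt'
    rw [hwm]
    exact Nat.le_findGreatest (le_of_lt hlt') ⟨hlt', m', hm', rfl⟩
  have hmlt : wt m < rt := hwm ▸ hNlt
  refine ⟨m, ⟨hm, hmlt, hmax, ?_, ?_⟩, ?_⟩
  · intro hcon
    have : inv m ≤ rt := le_trans (hwt m hm).1 (le_of_lt hmlt)
    have := hrt.2
    omega
  · rintro ⟨m'', hm'', h1, h2⟩
    have h3 : wt m < wt m'' := lt_of_le_of_lt (hwt m hm).2
      (lt_of_lt_of_le h1 (hwt m'' hm'').1)
    have h4 : wt m'' < rt := lt_of_le_of_lt (hwt m'' hm'').2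
      (lt_of_lt_of_le h2 hrt.1)
    exact absurd (hmax m'' hm'' h4) (not_le.mpr h3)
  · rintro m' ⟨hm', hlt', hmax', -, -⟩
    exact hwtinj m' m hm' hm (le_antisymm (hmax m' hm' hlt') (hmax' m hm hmlt))
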